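/- Bernstein condition for bounded heteroscedastic regression: let 0 < γ ≤ 1, suppose 0 < σ*²(x) ≤ 1/γ for all x, and let f : 𝒳 → [−1,1] be measurable. With y = f*(x) + √(σ*²(x))·ξ, the excess squared loss Δ(x,ξ) = (y − f(x))² − (y − f*(x))² on (𝒳 × ℝ, μ ⊗ ρ) satisfies Var[Δ] ≤ (8/γ) · E[Δ]. -/

import Mathlib

open MeasureTheory

lemma my_integrable_of_bound {α : Type*} [MeasurableSpace α] (μ : Measure α)
    [IsFiniteMeasure μ] {h : α → ℝ} (hm : Measurable h) (C : ℝ)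
    (hb : ∀ᵐ x ∂μ, |h x| ≤ C) : Integrable h μ :=
  (integrable_const C).mono' hm.aestronglyMeasurable (hb.mono fun x hx => by simpa using hx)

/-- Bernstein condition for bounded heteroscedastic regression: with
`y = f*(x) + √(σ*²(x))·ξ` and `Δ(x,ξ) = (y − f x)² − (y − f* x)²` on `(𝒳 × ℝ, μ ⊗ ρ)`,
if `0 < σ*²(x) ≤ 1/γ` then `Var[Δ] ≤ (8/γ)·E[Δ]`. -/
theorem bernstein_heteroscedastic_regression
    {𝒳 : Type*} [MeasurableSpace 𝒳]
    (μ : Measure 𝒳) [IsProbabilityMeasure μ]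
    (c₂ : ℝ) (hc₂ : 1 ≤ c₂)
    (ρ : Measure ℝ) [IsProbabilityMeasure ρ]
    (hρsupp : ∀ᵐ s ∂ρ, s ∈ Set.Icc (-c₂) c₂)
    (hρmean : ∫ s, s ∂ρ = 0) (hρvar : ∫ s, s ^ 2 ∂ρ = 1)
    (fstar : 𝒳 → ℝ) (hfstar : Measurable fstar) (hfstar1 : ∀ x, fstar x ∈ Set.Icc (-1 : ℝ) 1)
    (σsq : 𝒳 → ℝ) (hσsq : Measurable σsq)
    (γ : ℝ) (hγ0 : 0 < γ) (hγ1 : γ ≤ 1)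
    (hσsqpos : ∀ x, 0 < σsq x) (hσsqle : ∀ x, σsq x ≤ 1 / γ)
    (f : 𝒳 → ℝ) (hf : Measurable f) (hf1 : ∀ x, f x ∈ Set.Icc (-1 : ℝ) 1) :
    (∫ q : 𝒳 × ℝ,
        ((fstar q.1 + Real.sqrt (σsq q.1) * q.2 - f q.1) ^ 2
          - (fstar q.1 + Real.sqrt (σsq q.1) * q.2 - fstar q.1) ^ 2) ^ 2 ∂(μ.prod ρ))
      - (∫ q : 𝒳 × ℝ,
          ((fstar q.1 + Real.sqrt (σsq q.1) * q.2 - f q.1) ^ 2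
            - (fstar q.1 + Real.sqrt (σsq q.1) * q.2 - fstar q.1) ^ 2) ∂(μ.prod ρ)) ^ 2
      ≤ (8 / γ) * ∫ q : 𝒳 × ℝ,
          ((fstar q.1 + Real.sqrt (σsq q.1) * q.2 - f q.1) ^ 2
            - (fstar q.1 + Real.sqrt (σsq q.1) * q.2 - fstar q.1) ^ 2) ∂(μ.prod ρ) := by
  set G : 𝒳 → ℝ := fun x => fstar x - f x with hG
  have hGm : Measurable G := hfstar.sub hf
  have habs : ∀ x, |G x| ≤ 2 := by
    intro x
    have h1 := hfstar1 x; have h2 := hf1 x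
    simp only [Set.mem_Icc] at h1 h2
    rw [abs_le]; constructor <;> simp only [hG] <;> linarith
  have hs0 : ∀ x, (0:ℝ) ≤ Real.sqrt (σsq x) := fun x => Real.sqrt_nonneg _
  have hsb : ∀ x, Real.sqrt (σsq x) ≤ Real.sqrt (1/γ) :=
    fun x => Real.sqrt_le_sqrt (hσsqle x)
  have hG2 : ∀ x, G x ^ 2 ≤ 4 := by
    intro x
    have := habs x
    nlinarith [abs_nonneg (G x), sq_abs (G x)]
  -- integrability over μ
  have intA : Integrable (fun x => G x ^ 2) μ := by
    apply my_integrable_of_bound μ (hGm.pow_const 2) 4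
    filter_upwards with x
    rw [abs_pow]
    calc |G x| ^ 2 ≤ 2 ^ 2 := pow_le_pow_left₀ (abs_nonneg _) (habs x) 2
      _ = 4 := by norm_num
  have intD : Integrable (fun x => G x ^ 4) μ := by
    apply my_integrable_of_bound μ (hGm.pow_const 4) 16
    filter_upwards with x
    rw [abs_pow]
    calc |G x| ^ 4 ≤ 2 ^ 4 := pow_le_pow_left₀ (abs_nonneg _) (habs x) 4
      _ = 16 := by norm_num
  have intB : Integrable (fun x => 2 * G x * Real.sqrt (σsq x)) μ := by
    apply my_integrable_of_bound μ (((measurable_const.mul hGm).mul hσsq.sqrt))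
      (4 * Real.sqrt (1/γ))
    filter_upwards with x
    simp only [Pi.mul_apply]
    rw [abs_mul, abs_mul, abs_two]
    rw [abs_of_nonneg (hs0 x)]
    calc 2 * |G x| * Real.sqrt (σsq x) ≤ 2 * 2 * Real.sqrt (1/γ) :=
          mul_le_mul (mul_le_mul_of_nonneg_left (habs x) (by norm_num)) (hsb x) (hs0 x)
            (by norm_num)
      _ = 4 * Real.sqrt (1/γ) := by ring
  have intE : Integrable (fun x => 4 * G x ^ 3 * Real.sqrt (σsq x)) μ := by
    apply my_integrable_of_bound μ ((measurable_const.mul (hGm.pow_const 3)).mul hσsq.sqrt)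
      (32 * Real.sqrt (1/γ))
    filter_upwards with x
    simp only [Pi.mul_apply]
    rw [abs_mul, abs_mul, abs_pow, abs_of_nonneg (hs0 x),
      show |(4:ℝ)| = 4 by norm_num]
    calc 4 * |G x| ^ 3 * Real.sqrt (σsq x) ≤ 4 * 2 ^ 3 * Real.sqrt (1/γ) :=
          mul_le_mul
            (mul_le_mul_of_nonneg_left (pow_le_pow_left₀ (abs_nonneg _) (habs x) 3)
              (by norm_num)) (hsb x) (hs0 x) (by norm_num)
      _ = 32 * Real.sqrt (1/γ) := by ring
  have intF : Integrable (fun x => 4 * G x ^ 2 * σsq x) μ := by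
    apply my_integrable_of_bound μ ((measurable_const.mul (hGm.pow_const 2)).mul hσsq)
      (16 * (1/γ))
    filter_upwards with x
    simp only [Pi.mul_apply]
    rw [abs_mul, abs_mul, abs_pow, abs_of_nonneg (hσsqpos x).le,
      show |(4:ℝ)| = 4 by norm_num]
    calc 4 * |G x| ^ 2 * σsq x ≤ 4 * 2 ^ 2 * (1/γ) :=
          mul_le_mul
            (mul_le_mul_of_nonneg_left (pow_le_pow_left₀ (abs_nonneg _) (habs x) 2)
              (by norm_num)) (hσsqle x) (hσsqpos x).le (by norm_num)
      _ = 16 * (1/γ) := by ring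
  -- integrability over ρ
  have intId : Integrable (fun s : ℝ => s) ρ := by
    apply my_integrable_of_bound ρ measurable_id' c₂
    filter_upwards [hρsupp] with s hs
    exact abs_le.2 ⟨hs.1, hs.2⟩
  have intSq : Integrable (fun s : ℝ => s ^ 2) ρ := by
    apply my_integrable_of_bound ρ (measurable_id'.pow_const 2) (c₂ ^ 2)
    filter_upwards [hρsupp] with s hs
    rw [abs_pow]
    exact pow_le_pow_left₀ (abs_nonneg _) (abs_le.2 ⟨hs.1, hs.2⟩) 2
  have intOne : Integrable (fun _ : ℝ => (1:ℝ)) ρ := integrable_const 1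
  -- product integral identities
  have p1 : (∫ a : 𝒳 × ℝ, G a.1 ^ 2 * 1 ∂(μ.prod ρ))
      = (∫ x, G x ^ 2 ∂μ) * ∫ _ : ℝ, (1:ℝ) ∂ρ :=
    integral_prod_mul (fun x => G x ^ 2) (fun _ => (1:ℝ))
  have p2 : (∫ a : 𝒳 × ℝ, 2 * G a.1 * Real.sqrt (σsq a.1) * a.2 ∂(μ.prod ρ))
      = (∫ x, 2 * G x * Real.sqrt (σsq x) ∂μ) * ∫ s : ℝ, s ∂ρ :=
    integral_prod_mul (fun x => 2 * G x * Real.sqrt (σsq x)) (fun s => s)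
  have p3 : (∫ a : 𝒳 × ℝ, G a.1 ^ 4 * 1 ∂(μ.prod ρ))
      = (∫ x, G x ^ 4 ∂μ) * ∫ _ : ℝ, (1:ℝ) ∂ρ :=
    integral_prod_mul (fun x => G x ^ 4) (fun _ => (1:ℝ))
  have p4 : (∫ a : 𝒳 × ℝ, 4 * G a.1 ^ 3 * Real.sqrt (σsq a.1) * a.2 ∂(μ.prod ρ))
      = (∫ x, 4 * G x ^ 3 * Real.sqrt (σsq x) ∂μ) * ∫ s : ℝ, s ∂ρ :=
    integral_prod_mul (fun x => 4 * G x ^ 3 * Real.sqrt (σsq x)) (fun s => s)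
  have p5 : (∫ a : 𝒳 × ℝ, 4 * G a.1 ^ 2 * σsq a.1 * a.2 ^ 2 ∂(μ.prod ρ))
      = (∫ x, 4 * G x ^ 2 * σsq x ∂μ) * ∫ s : ℝ, s ^ 2 ∂ρ :=
    integral_prod_mul (fun x => 4 * G x ^ 2 * σsq x) (fun s => s ^ 2)
  -- first moment
  have hI1 : (∫ q : 𝒳 × ℝ,
      ((fstar q.1 + Real.sqrt (σsq q.1) * q.2 - f q.1) ^ 2
        - (fstar q.1 + Real.sqrt (σsq q.1) * q.2 - fstar q.1) ^ 2) ∂(μ.prod ρ))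
      = ∫ x, G x ^ 2 ∂μ := by
    have e1 : (fun q : 𝒳 × ℝ =>
        ((fstar q.1 + Real.sqrt (σsq q.1) * q.2 - f q.1) ^ 2
          - (fstar q.1 + Real.sqrt (σsq q.1) * q.2 - fstar q.1) ^ 2))
        = fun q : 𝒳 × ℝ => G q.1 ^ 2 * 1 + 2 * G q.1 * Real.sqrt (σsq q.1) * q.2 := by
      funext q; simp only [hG]; ring
    rw [show (∫ q : 𝒳 × ℝ,
        ((fstar q.1 + Real.sqrt (σsq q.1) * q.2 - f q.1) ^ 2
          - (fstar q.1 + Real.sqrt (σsq q.1) * q.2 - fstar q.1) ^ 2) ∂(μ.prod ρ))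
        = ∫ q : 𝒳 × ℝ, (G q.1 ^ 2 * 1 + 2 * G q.1 * Real.sqrt (σsq q.1) * q.2) ∂(μ.prod ρ)
        from by rw [e1]]
    rw [integral_add
        ((intA.mul_prod intOne : Integrable
          (fun z : 𝒳 × ℝ => (fun x => G x ^ 2) z.1 * (fun _ : ℝ => (1:ℝ)) z.2) (μ.prod ρ)))
        ((intB.mul_prod intId : Integrable
          (fun z : 𝒳 × ℝ => (fun x => 2 * G x * Real.sqrt (σsq x)) z.1
            * (fun s : ℝ => s) z.2) (μ.prod ρ))),
      p1, p2, hρmean]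
    simp
  -- second moment
  have hI2 : (∫ q : 𝒳 × ℝ,
      ((fstar q.1 + Real.sqrt (σsq q.1) * q.2 - f q.1) ^ 2
        - (fstar q.1 + Real.sqrt (σsq q.1) * q.2 - fstar q.1) ^ 2) ^ 2 ∂(μ.prod ρ))
      = (∫ x, G x ^ 4 ∂μ) + ∫ x, 4 * G x ^ 2 * σsq x ∂μ := by
    have e2 : (fun q : 𝒳 × ℝ =>
        ((fstar q.1 + Real.sqrt (σsq q.1) * q.2 - f q.1) ^ 2
          - (fstar q.1 + Real.sqrt (σsq q.1) * q.2 - fstar q.1) ^ 2) ^ 2)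
        = fun q : 𝒳 × ℝ => (G q.1 ^ 4 * 1 + 4 * G q.1 ^ 3 * Real.sqrt (σsq q.1) * q.2)
            + 4 * G q.1 ^ 2 * σsq q.1 * q.2 ^ 2 := by
      funext q
      have hs : Real.sqrt (σsq q.1) ^ 2 = σsq q.1 := Real.sq_sqrt (hσsqpos q.1).le
      simp only [hG]
      linear_combination (4 * (fstar q.1 - f q.1) ^ 2 * q.2 ^ 2) * hs
    rw [show (∫ q : 𝒳 × ℝ,
        ((fstar q.1 + Real.sqrt (σsq q.1) * q.2 - f q.1) ^ 2
          - (fstar q.1 + Real.sqrt (σsq q.1) * q.2 - fstar q.1) ^ 2) ^ 2 ∂(μ.prod ρ))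
        = ∫ q : 𝒳 × ℝ, ((G q.1 ^ 4 * 1 + 4 * G q.1 ^ 3 * Real.sqrt (σsq q.1) * q.2)
            + 4 * G q.1 ^ 2 * σsq q.1 * q.2 ^ 2) ∂(μ.prod ρ) from by rw [e2]]
    have intDE : Integrable
        (fun z : 𝒳 × ℝ => G z.1 ^ 4 * 1 + 4 * G z.1 ^ 3 * Real.sqrt (σsq z.1) * z.2)
        (μ.prod ρ) := by exact (intD.mul_prod intOne).add (intE.mul_prod intId)
    rw [integral_add intDE
        ((intF.mul_prod intSq : Integrable
          (fun z : 𝒳 × ℝ => (fun x => 4 * G x ^ 2 * σsq x) z.1 * (fun s : ℝ => s ^ 2) z.2)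
          (μ.prod ρ))),
      integral_add
        ((intD.mul_prod intOne : Integrable
          (fun z : 𝒳 × ℝ => (fun x => G x ^ 4) z.1 * (fun _ : ℝ => (1:ℝ)) z.2) (μ.prod ρ)))
        ((intE.mul_prod intId : Integrable
          (fun z : 𝒳 × ℝ => (fun x => 4 * G x ^ 3 * Real.sqrt (σsq x)) z.1
            * (fun s : ℝ => s) z.2) (μ.prod ρ))),
      p3, p4, p5, hρmean, hρvar]
    simp
  -- pointwise bound and conclusion
  have hmono : (∫ x, G x ^ 4 ∂μ) + (∫ x, 4 * G x ^ 2 * σsq x ∂μ)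
      ≤ (8 / γ) * ∫ x, G x ^ 2 ∂μ := by
    rw [← integral_add intD intF, ← integral_const_mul]
    apply integral_mono (intD.add intF) (intA.const_mul _)
    intro x
    simp only [Pi.add_apply]
    have h1 : G x ^ 2 ≤ 4 := hG2 x
    have h2 : σsq x * γ ≤ 1 := by
      rw [← le_div_iff₀ hγ0]; exact hσsqle x
    rw [div_mul_eq_mul_div, le_div_iff₀ hγ0]
    nlinarith [sq_nonneg (G x), sq_nonneg (G x ^ 2), (hσsqpos x).le,
      mul_nonneg (sub_nonneg.2 hγ1) (sq_nonneg (G x ^ 2)),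
      mul_nonneg (sq_nonneg (G x)) (sub_nonneg.2 h2),
      mul_nonneg (sub_nonneg.2 h1) (sq_nonneg (G x))]
  calc _ ≤ (∫ q : 𝒳 × ℝ,
        ((fstar q.1 + Real.sqrt (σsq q.1) * q.2 - f q.1) ^ 2
          - (fstar q.1 + Real.sqrt (σsq q.1) * q.2 - fstar q.1) ^ 2) ^ 2 ∂(μ.prod ρ)) :=
      sub_le_self _ (sq_nonneg _)
    _ = (∫ x, G x ^ 4 ∂μ) + ∫ x, 4 * G x ^ 2 * σsq x ∂μ := hI2
    _ ≤ (8 / γ) * ∫ x, G x ^ 2 ∂μ := hmono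
    _ = _ := by rw [hI1]
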